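/- Let I ⊆ 𝒜 = ℝ⟨x,x*⟩ be a left ideal generated by polynomials of degree ≤ d, and let G ⊆ 𝒜^H_d be a subspace such that 𝒜^H_d = I^ℓ_d ⊕ G (internal direct sum of subspaces). Then I ∩ 𝒜G = 𝒜I^ℓ_d ∩ 𝒜G = {0}. -/

import Mathlib

open Matrix

noncomputable section

/-- The free `*`-algebra `ℝ⟨x,x*⟩` on `g` variables: the free algebra on the `2g`
generators `x₁,…,x_g` (`Sum.inl`) and `x₁*,…,x_g*` (`Sum.inr`). -/
abbrev FA (g : ℕ) := FreeAlgebra ℝ (Fin g ⊕ Fin g)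

/-- The involution on the free `*`-algebra: the unique `ℝ`-linear map reversing products
and interchanging `xᵢ` and `xᵢ*`, as a linear map. -/
def fstarL (g : ℕ) : FA g →ₗ[ℝ] FA g :=
  ((MulOpposite.opLinearEquiv ℝ).symm.toLinearMap).comp
    (FreeAlgebra.lift ℝ
      (fun i : Fin g ⊕ Fin g => MulOpposite.op (FreeAlgebra.ι ℝ (Sum.swap i)))).toLinearMap

/-- The involution `p ↦ p*` on the free `*`-algebra. -/
def fstar {g : ℕ} (p : FA g) : FA g := fstarL g p

/-- A left ideal `I` is real if whenever `∑ᵢ aᵢ* aᵢ ∈ I + I*`, every `aᵢ ∈ I`. -/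
def IsRealIdeal {g : ℕ} (I : Submodule (FA g) (FA g)) : Prop :=
  ∀ (r : ℕ) (a : Fin r → FA g),
    (∃ u ∈ I, ∃ w ∈ I, (∑ i, fstar (a i) * a i) = u + fstar w) → ∀ i, a i ∈ I

/-- The real radical: the smallest real left ideal containing `I`. -/
def rr {g : ℕ} (I : Submodule (FA g) (FA g)) : Submodule (FA g) (FA g) :=
  sInf {J | IsRealIdeal J ∧ I ≤ J}

/-- The identification of the free algebra with the monoid algebra on words. -/
def toMA {g : ℕ} : FA g ≃ₐ[ℝ] MonoidAlgebra ℝ (FreeMonoid (Fin g ⊕ Fin g)) :=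
  FreeAlgebra.equivMonoidAlgebraFreeMonoid

/-- `𝒜_d`: the subspace of polynomials of degree at most `d`. -/
def Adeg (g d : ℕ) : Submodule ℝ (FA g) :=
  (Finsupp.supported ℝ ℝ {w : FreeMonoid (Fin g ⊕ Fin g) | w.length ≤ d}).comap
    ((MonoidAlgebra.coeffLinearEquiv ℝ).toLinearMap.comp (toMA (g := g)).toLinearMap)

/-- `𝒜^H_d`: the subspace of homogeneous polynomials of degree `d` (together with `0`). -/
def AdegH (g d : ℕ) : Submodule ℝ (FA g) :=
  (Finsupp.supported ℝ ℝ {w : FreeMonoid (Fin g ⊕ Fin g) | w.length = d}).comap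
    ((MonoidAlgebra.coeffLinearEquiv ℝ).toLinearMap.comp (toMA (g := g)).toLinearMap)

/-- The degree of a polynomial: the maximal length of a word occurring in it
(`0` for the zero polynomial). -/
def deg {g : ℕ} (p : FA g) : ℕ :=
  (toMA (g := g) p).coeff.support.sup FreeMonoid.length

/-- The leading polynomial: the homogeneous component of top degree. -/
def lead {g : ℕ} (p : FA g) : FA g :=
  (toMA (g := g)).symm (MonoidAlgebra.ofCoeff ((toMA (g := g) p).coeff.filter (fun w => FreeMonoid.length w = deg p)))

/-- `V^ℓ_d`: the span of leading polynomials of all degree-`d` elements of `V`. -/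
def ellSet {g : ℕ} (V : Submodule ℝ (FA g)) (d : ℕ) : Submodule ℝ (FA g) :=
  Submodule.span ℝ {q | ∃ p ∈ V, p ≠ 0 ∧ deg p = d ∧ q = lead p}

open Finsupp
attribute [local instance] Classical.propDecidable

abbrev Wd (g : ℕ) := FreeMonoid (Fin g ⊕ Fin g)
abbrev MAg (g : ℕ) := MonoidAlgebra ℝ (Wd g)

variable {g : ℕ}

lemma mulW_inj (w : Wd g) : Function.Injective (fun v : Wd g => w * v) :=
  fun _ _ h => mul_left_cancel h

/-- homogeneous component of degree `e` as a linear map -/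
def pie (g e : ℕ) : MAg g →ₗ[ℝ] MAg g where
  toFun f := MonoidAlgebra.ofCoeff (f.coeff.filter (fun w => FreeMonoid.length w = e))
  map_add' := fun _ _ => congrArg MonoidAlgebra.ofCoeff Finsupp.filter_add
  map_smul' := fun _ _ => congrArg MonoidAlgebra.ofCoeff Finsupp.filter_smul

lemma pie_apply (e : ℕ) (f : MAg g) (v : Wd g) :
    (pie g e f).coeff v = if FreeMonoid.length v = e then f.coeff v else 0 := by
  classical
  show (Finsupp.filter (fun w => FreeMonoid.length w = e) f.coeff) v = _
  rw [Finsupp.filter_apply]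

/-- slicing off a left prefix `w` -/
def slc (w : Wd g) : MAg g →ₗ[ℝ] MAg g :=
  (MonoidAlgebra.coeffLinearEquiv ℝ).symm.toLinearMap ∘ₗ
    Finsupp.lcomapDomain (fun v : Wd g => w * v) (mulW_inj w) ∘ₗ
      (MonoidAlgebra.coeffLinearEquiv ℝ).toLinearMap

lemma slc_apply (w : Wd g) (f : MAg g) (v : Wd g) : (slc w f).coeff v = f.coeff (w * v) := rfl

lemma single_one_mul_eq_mapDomain (w : Wd g) (u : MAg g) :
    MonoidAlgebra.single w (1:ℝ) * u
      = MonoidAlgebra.ofCoeff (Finsupp.mapDomain (fun v => w * v) u.coeff) := by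
  induction u using MonoidAlgebra.induction_linear with
  | zero => simp
  | add a b ha hb => rw [mul_add, ha, hb, MonoidAlgebra.coeff_add, Finsupp.mapDomain_add]; rfl
  | single v c =>
      rw [MonoidAlgebra.single_mul_single, one_mul, MonoidAlgebra.coeff_single,
        Finsupp.mapDomain_single]
      rfl

lemma slc_single_one_mul (w w' : Wd g) (h : w.length = w'.length) (u : MAg g) :
    slc w (MonoidAlgebra.single w' (1:ℝ) * u) = if w = w' then u else 0 := by
  classical
  rw [single_one_mul_eq_mapDomain]
  split_ifs with hww
  · subst hww
    ext v
    rw [slc_apply, MonoidAlgebra.coeff_ofCoeff, Finsupp.mapDomain_apply (mulW_inj w)]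
  · ext v
    rw [slc_apply]
    simp only [MonoidAlgebra.coeff_zero, Finsupp.coe_zero, Pi.zero_apply]
    rw [MonoidAlgebra.coeff_ofCoeff, Finsupp.mapDomain_of_notMem_range]
    rintro ⟨v₂, hv₂⟩
    apply hww
    have hl : (FreeMonoid.toList w').length = (FreeMonoid.toList w).length := h.symm
    have : FreeMonoid.toList w' ++ FreeMonoid.toList v₂
        = FreeMonoid.toList w ++ FreeMonoid.toList v := congrArg FreeMonoid.toList hv₂
    have := List.append_inj this hl
    exact (FreeMonoid.toList.injective this.1).symm

/-- degree on the monoid-algebra side -/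
def degA (f : MAg g) : ℕ := f.coeff.support.sup FreeMonoid.length

lemma le_degA {f : MAg g} {v : Wd g} (hv : v ∈ f.coeff.support) : v.length ≤ degA f :=
  Finset.le_sup hv

lemma degA_spec {f : MAg g} (hf : f ≠ 0) : ∃ v ∈ f.coeff.support, v.length = degA f := by
  obtain ⟨v, hv, hv2⟩ := Finset.exists_mem_eq_sup f.coeff.support
    (Finsupp.support_nonempty_iff.2 (fun h => hf (MonoidAlgebra.coeff_eq_zero.1 h)))
    FreeMonoid.length
  exact ⟨v, hv, hv2.symm⟩

lemma pie_eq_zero (e : ℕ) {f : MAg g} (h : ∀ v ∈ f.coeff.support, FreeMonoid.length v ≠ e) :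
    pie g e f = 0 := by
  ext v
  rw [pie_apply]
  by_cases hv : v ∈ f.coeff.support
  · simp [h v hv]
  · simp [Finsupp.notMem_support_iff.1 hv]

lemma pie_degA_ne {f : MAg g} (hf : f ≠ 0) : pie g (degA f) f ≠ 0 := by
  obtain ⟨v, hv, hlen⟩ := degA_spec hf
  intro h
  have h2 : (pie g (degA f) f).coeff v = 0 := by rw [h]; rfl
  rw [pie_apply, hlen, if_pos rfl] at h2
  exact Finsupp.mem_support_iff.1 hv h2

lemma supp_pie (e : ℕ) (f : MAg g) {v : Wd g} (hv : v ∈ (pie g e f).coeff.support) :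
    v ∈ f.coeff.support ∧ v.length = e := by
  have := Finsupp.mem_support_iff.1 hv
  rw [pie_apply] at this
  by_cases h : v.length = e
  · exact ⟨Finsupp.mem_support_iff.2 (by simpa [h] using this), h⟩
  · simp [h] at this

lemma supp_single_one_mul {w : Wd g} {u : MAg g} {v : Wd g}
    (hv : v ∈ (MonoidAlgebra.single w (1:ℝ) * u).coeff.support) :
    ∃ v₂ ∈ u.coeff.support, v = w * v₂ := by
  classical
  rw [single_one_mul_eq_mapDomain, MonoidAlgebra.coeff_ofCoeff] at hv
  have := Finsupp.mapDomain_support hv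
  simp only [Finset.mem_image] at this
  obtain ⟨v₂, hv₂, rfl⟩ := this
  exact ⟨v₂, hv₂, rfl⟩

lemma pie_single_one_mul (w : Wd g) (j : ℕ) (r : MAg g) :
    pie g (w.length + j) (MonoidAlgebra.single w (1:ℝ) * r)
      = MonoidAlgebra.single w (1:ℝ) * pie g j r := by
  classical
  rw [single_one_mul_eq_mapDomain, single_one_mul_eq_mapDomain]
  ext v
  by_cases hv : v ∈ Set.range (fun v₂ : Wd g => w * v₂)
  · obtain ⟨v₂, rfl⟩ := hv
    rw [pie_apply]
    simp only [MonoidAlgebra.coeff_ofCoeff]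
    rw [Finsupp.mapDomain_apply (mulW_inj w), Finsupp.mapDomain_apply (mulW_inj w),
      pie_apply]
    have : FreeMonoid.length (w * v₂) = w.length + v₂.length := FreeMonoid.length_mul w v₂
    by_cases h : v₂.length = j
    · simp [this, h]
    · have : ¬ (FreeMonoid.length (w * v₂) = w.length + j) := by omega
      simp [this, h]
  · rw [pie_apply]
    simp only [MonoidAlgebra.coeff_ofCoeff]
    rw [Finsupp.mapDomain_of_notMem_range _ _ hv, Finsupp.mapDomain_of_notMem_range _ _ hv]
    simp

lemma exists_prefix (v : Wd g) (k : ℕ) (hk : k ≤ v.length) :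
    ∃ w₁ w₂ : Wd g, v = w₁ * w₂ ∧ w₁.length = k := by
  refine ⟨FreeMonoid.ofList ((FreeMonoid.toList v).take k),
    FreeMonoid.ofList ((FreeMonoid.toList v).drop k), ?_, ?_⟩
  · apply FreeMonoid.toList.injective
    simp [FreeMonoid.toList_mul]
  · show ((FreeMonoid.toList v).take k).length = k
    simp [List.length_take]
    exact hk

/-- `𝒜·U` on the monoid algebra side -/
def prodSpan (U : Submodule ℝ (MAg g)) : Submodule ℝ (MAg g) :=
  Submodule.span ℝ {x | ∃ w u, u ∈ U ∧ x = MonoidAlgebra.single w (1:ℝ) * u}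

/-- degree-`e` homogeneous part of `𝒜·U` when `U` is homogeneous of degree `d` -/
def prodSpanH (d : ℕ) (U : Submodule ℝ (MAg g)) (e : ℕ) : Submodule ℝ (MAg g) :=
  Submodule.span ℝ
    {x | ∃ w u, FreeMonoid.length w + d = e ∧ u ∈ U ∧ x = MonoidAlgebra.single w (1:ℝ) * u}

lemma mul_mem_prodSpan (U : Submodule ℝ (MAg g)) (b : MAg g) {u : MAg g} (hu : u ∈ U) :
    b * u ∈ prodSpan U := by
  induction b using MonoidAlgebra.induction_linear with
  | zero => simp [Submodule.zero_mem]
  | add a b ha hb => rw [add_mul]; exact Submodule.add_mem _ ha hb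
  | single w c =>
      have h1 : (MonoidAlgebra.single w c : MAg g) = c • MonoidAlgebra.single w (1:ℝ) := by
        rw [MonoidAlgebra.smul_single', mul_one]
      rw [h1, smul_mul_assoc]
      exact Submodule.smul_mem _ _ (Submodule.subset_span ⟨w, u, hu, rfl⟩)

section Homog
variable {d : ℕ} {U V : Submodule ℝ (MAg g)}
  (hU : ∀ u ∈ U, ∀ v ∈ (u : MAg g).coeff.support, FreeMonoid.length v = d)

include hU in
lemma pie_mem_prodSpanH (e : ℕ) : prodSpan U ≤ (prodSpanH d U e).comap (pie g e) := by
  rw [prodSpan, Submodule.span_le]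
  rintro x ⟨w, u, hu, rfl⟩
  simp only [SetLike.mem_coe, Submodule.mem_comap]
  have hsupp : ∀ v ∈ (MonoidAlgebra.single w (1:ℝ) * u).coeff.support,
      FreeMonoid.length v = w.length + d := by
    intro v hv
    obtain ⟨v₂, hv₂, rfl⟩ := supp_single_one_mul hv
    rw [FreeMonoid.length_mul, hU u hu v₂ hv₂]
  by_cases he : w.length + d = e
  · have : pie g e (MonoidAlgebra.single w (1:ℝ) * u) = MonoidAlgebra.single w (1:ℝ) * u := by
      ext v
      rw [pie_apply]
      by_cases hv : v ∈ (MonoidAlgebra.single w (1:ℝ) * u).coeff.support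
      · simp [hsupp v hv, he]
      · have h0 := Finsupp.notMem_support_iff.1 hv
        simp [h0]
    rw [this]
    exact Submodule.subset_span ⟨w, u, he, hu, rfl⟩
  · rw [pie_eq_zero e (fun v hv => by rw [hsupp v hv]; exact he)]
    exact Submodule.zero_mem _

lemma slc_prodSpanH {e : ℕ} (w : Wd g) (hw : w.length + d = e) :
    prodSpanH d U e ≤ U.comap (slc w) := by
  rw [prodSpanH, Submodule.span_le]
  rintro x ⟨w', u, hw', hu, rfl⟩
  simp only [SetLike.mem_coe, Submodule.mem_comap]
  rw [slc_single_one_mul w w' (by omega) u]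
  split_ifs
  · exact hu
  · exact Submodule.zero_mem _

include hU in
lemma supp_prodSpanH {e : ℕ} {h : MAg g} (hh : h ∈ prodSpanH d U e) :
    ∀ v ∈ h.coeff.support, FreeMonoid.length v = e := by
  have : prodSpanH d U e ≤ (Finsupp.supported ℝ ℝ {v : Wd g | FreeMonoid.length v = e}).comap
      (MonoidAlgebra.coeffLinearEquiv ℝ).toLinearMap := by
    rw [prodSpanH, Submodule.span_le]
    rintro x ⟨w, u, hw, hu, rfl⟩
    rw [SetLike.mem_coe, Submodule.mem_comap, LinearEquiv.coe_coe,
      MonoidAlgebra.coeffLinearEquiv_apply, Finsupp.mem_supported]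
    intro v hv
    obtain ⟨v₂, hv₂, rfl⟩ := supp_single_one_mul hv
    simp only [Set.mem_setOf_eq]
    rw [FreeMonoid.length_mul, hU u hu v₂ hv₂, hw]
  intro v hv
  by_contra hne
  exact Finsupp.mem_support_iff.1 hv
    ((Finsupp.mem_supported' _ _).1 (Submodule.mem_comap.1 (this hh)) v hne)

lemma prodSpanH_bot_of_lt {e : ℕ} (he : e < d) : prodSpanH d U e = ⊥ := by
  rw [prodSpanH, Submodule.span_eq_bot]
  rintro x ⟨w, u, hw, hu, rfl⟩
  omega

include hU in
lemma eq_zero_of_mem_prodSpanH_disj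
    (hV : ∀ u ∈ V, ∀ v ∈ (u : MAg g).coeff.support, FreeMonoid.length v = d)
    (hdisj : Disjoint U V) {e : ℕ} {h : MAg g}
    (hhU : h ∈ prodSpanH d U e) (hhV : h ∈ prodSpanH d V e) : h = 0 := by
  rcases lt_or_ge e d with he | he
  · rw [prodSpanH_bot_of_lt he] at hhU
    simpa using hhU
  · ext v
    simp only [MonoidAlgebra.coeff_zero, Finsupp.coe_zero, Pi.zero_apply]
    by_cases hv : v ∈ h.coeff.support
    · have hlen : FreeMonoid.length v = e := supp_prodSpanH hU hhU v hv
      obtain ⟨w₁, w₂, rfl, hw₁⟩ := exists_prefix v (e - d) (by omega)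
      have hw : w₁.length + d = e := by omega
      have h1 : slc w₁ h ∈ U := slc_prodSpanH w₁ hw hhU
      have h2 : slc w₁ h ∈ V := slc_prodSpanH w₁ hw hhV
      have : slc w₁ h = 0 := by
        have := hdisj.le_bot ⟨h1, h2⟩
        simpa using this
      have := congrArg (fun x : MAg g => x.coeff w₂) this
      simpa [slc_apply] using this
    · exact Finsupp.notMem_support_iff.1 hv

include hU in
lemma supp_prodSpan_ge {x : MAg g} (hx : x ∈ prodSpan U) {v : Wd g} (hv : v ∈ x.coeff.support) :
    d ≤ FreeMonoid.length v := by
  by_contra hlt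
  set e := FreeMonoid.length v with he
  have h1 : pie g e x ∈ prodSpanH d U e := pie_mem_prodSpanH hU e hx
  rw [prodSpanH_bot_of_lt (by omega), Submodule.mem_bot] at h1
  have : (pie g e x).coeff v = 0 := by rw [h1]; rfl
  rw [pie_apply, if_pos rfl] at this
  exact Finsupp.mem_support_iff.1 hv this

include hU in
lemma eq_zero_of_mem_prodSpan_inter
    (hV : ∀ u ∈ V, ∀ v ∈ (u : MAg g).coeff.support, FreeMonoid.length v = d)
    (hdisj : Disjoint U V) {x : MAg g}
    (hxU : x ∈ prodSpan U) (hxV : x ∈ prodSpan V) : x = 0 := by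
  by_contra hne
  apply pie_degA_ne hne
  exact eq_zero_of_mem_prodSpanH_disj hU hV hdisj
    (pie_mem_prodSpanH hU (degA x) hxU) (pie_mem_prodSpanH hV (degA x) hxV)

end Homog

/-! ### Representations of elements of a left ideal generated in degree ≤ d -/

section RepD
variable (J : Submodule ℝ (MAg g)) (d : ℕ)

/-- normalized representation with left-factor words bounded by `m` -/
def RepD (m : ℕ) (f : MAg g) : Prop :=
  ∃ (f₀ : MAg g) (F : Wd g →₀ MAg g),
    f₀ ∈ J ∧ (∀ v ∈ f₀.coeff.support, FreeMonoid.length v < d) ∧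
    (∀ w, F w ∈ J) ∧ (∀ w, ∀ v ∈ (F w).coeff.support, FreeMonoid.length v ≤ d) ∧
    (∀ w, F w ≠ 0 → FreeMonoid.length w + d ≤ m) ∧
    f = f₀ + F.sum (fun w r => MonoidAlgebra.single w (1:ℝ) * r)

variable {J d}

lemma Rep_zero (m : ℕ) : RepD J d m 0 :=
  ⟨0, 0, Submodule.zero_mem _, by simp, fun w => by simp [Submodule.zero_mem],
    fun w => by simp, fun w h => absurd rfl h, by simp⟩

lemma Rep_mono {m m' : ℕ} (h : m ≤ m') {f : MAg g} (hf : RepD J d m f) : RepD J d m' f := by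
  obtain ⟨f₀, F, h1, h2, h3, h4, h5, h6⟩ := hf
  exact ⟨f₀, F, h1, h2, h3, h4, fun w hw => le_trans (h5 w hw) h, h6⟩

lemma Rep_add {m : ℕ} {f f' : MAg g} (hf : RepD J d m f) (hf' : RepD J d m f') :
    RepD J d m (f + f') := by
  obtain ⟨f₀, F, h1, h2, h3, h4, h5, h6⟩ := hf
  obtain ⟨f₀', F', h1', h2', h3', h4', h5', h6'⟩ := hf'
  refine ⟨f₀ + f₀', F + F', Submodule.add_mem _ h1 h1', ?_, ?_, ?_, ?_, ?_⟩
  · intro v hv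
    rw [MonoidAlgebra.coeff_add] at hv
    rcases Finset.mem_union.1 (Finsupp.support_add hv) with h | h
    exacts [h2 v h, h2' v h]
  · intro w; rw [Finsupp.add_apply]; exact Submodule.add_mem _ (h3 w) (h3' w)
  · intro w v hv
    rw [Finsupp.add_apply, MonoidAlgebra.coeff_add] at hv
    rcases Finset.mem_union.1 (Finsupp.support_add hv) with h | h
    exacts [h4 w v h, h4' w v h]
  · intro w hw
    rw [Finsupp.add_apply] at hw
    by_cases h : F w = 0
    · exact h5' w (fun h' => hw (by rw [h, h', add_zero]))
    · exact h5 w h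
  · rw [h6, h6', Finsupp.sum_add_index' (fun w => by rw [mul_zero])
      (fun w r r' => by rw [mul_add])]
    abel

lemma Rep_f0 (m : ℕ) {f₀ : MAg g} (h1 : f₀ ∈ J)
    (h2 : ∀ v ∈ f₀.coeff.support, FreeMonoid.length v < d) : RepD J d m f₀ :=
  ⟨f₀, 0, h1, h2, fun w => by simp [Submodule.zero_mem], fun w => by simp,
    fun w h => absurd rfl h, by simp⟩

lemma Rep_single_term {m : ℕ} {w : Wd g} {r : MAg g} (h1 : r ∈ J)
    (h2 : ∀ v ∈ r.coeff.support, FreeMonoid.length v ≤ d) (h3 : FreeMonoid.length w + d ≤ m) :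
    RepD J d m (MonoidAlgebra.single w (1:ℝ) * r) := by
  classical
  refine ⟨0, Finsupp.single w r, Submodule.zero_mem _, by simp, ?_, ?_, ?_, ?_⟩
  · intro w'
    rw [Finsupp.single_apply]
    split_ifs
    exacts [h1, Submodule.zero_mem _]
  · intro w' v hv
    rw [Finsupp.single_apply] at hv
    split_ifs at hv with h
    · subst h; exact h2 v hv
    · simp at hv
  · intro w' hw'
    rw [Finsupp.single_apply] at hw'
    split_ifs at hw' with h
    · subst h; exact h3
    · exact absurd rfl hw'
  · rw [Finsupp.sum_single_index (by rw [mul_zero]), zero_add]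

lemma Rep_sum {m : ℕ} {ι : Type*} (s : Finset ι) (φ : ι → MAg g)
    (h : ∀ i ∈ s, RepD J d m (φ i)) : RepD J d m (∑ i ∈ s, φ i) := by
  classical
  induction s using Finset.induction_on with
  | empty => simpa using Rep_zero m
  | insert _ _ hni ih =>
      rw [Finset.sum_insert hni]
      exact Rep_add (h _ (Finset.mem_insert_self _ _))
        (ih fun i hi => h i (Finset.mem_insert_of_mem hi))

variable (hJ : ∀ (b : MAg g), ∀ u ∈ J, b * u ∈ J)

include hJ in
/-- Normalization: multiplying a low-degree element of `J` by a word. -/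
lemma Rep_norm (w : Wd g) (c : ℝ) {f₀ : MAg g} (h1 : f₀ ∈ J)
    (h2 : ∀ v ∈ f₀.coeff.support, FreeMonoid.length v < d) :
    RepD J d (FreeMonoid.length w + d - 1) (MonoidAlgebra.single w c * f₀) := by
  classical
  by_cases hz : f₀ = 0
  · rw [hz, mul_zero]; exact Rep_zero _
  set d₀ := degA f₀ with hd₀
  have hd₀lt : d₀ < d := by
    obtain ⟨v, hv, hvl⟩ := degA_spec hz
    rw [hd₀, ← hvl]; exact h2 v hv
  have hsm : (MonoidAlgebra.single w c : MAg g) = c • MonoidAlgebra.single w (1:ℝ) := by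
    rw [MonoidAlgebra.smul_single', mul_one]
  by_cases hcase : FreeMonoid.length w + d₀ < d
  · -- entire product has degree < d
    apply Rep_f0
    · exact hJ _ _ h1
    · intro v hv
      have : v ∈ (MonoidAlgebra.single w (1:ℝ) * f₀).coeff.support := by
        rw [hsm, smul_mul_assoc, MonoidAlgebra.coeff_smul] at hv
        exact Finsupp.support_smul hv
      obtain ⟨v₂, hv₂, rfl⟩ := supp_single_one_mul this
      have := le_degA hv₂
      rw [FreeMonoid.length_mul]
      omega
  · -- split off a degree-d tail
    obtain ⟨w₁, w₂, rfl, hw₁⟩ :=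
      exists_prefix w (FreeMonoid.length w - (d - d₀)) (by omega)
    have hw₂ : FreeMonoid.length w₂ = d - d₀ := by
      have := FreeMonoid.length_mul w₁ w₂
      omega
    have heq : (MonoidAlgebra.single (w₁ * w₂) c : MAg g) * f₀
        = MonoidAlgebra.single w₁ (1:ℝ) * (MonoidAlgebra.single w₂ c * f₀) := by
      rw [← mul_assoc, MonoidAlgebra.single_mul_single, one_mul]
    rw [heq]
    apply Rep_single_term (hJ _ _ h1)
    · intro v hv
      have hv' : v ∈ (MonoidAlgebra.single w₂ (1:ℝ) * f₀).coeff.support := by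
        have hsm2 : (MonoidAlgebra.single w₂ c : MAg g)
            = c • MonoidAlgebra.single w₂ (1:ℝ) := by
          rw [MonoidAlgebra.smul_single', mul_one]
        rw [hsm2, smul_mul_assoc, MonoidAlgebra.coeff_smul] at hv
        exact Finsupp.support_smul hv
      obtain ⟨v₂, hv₂, rfl⟩ := supp_single_one_mul hv'
      have := le_degA hv₂
      rw [FreeMonoid.length_mul]
      omega
    · rw [FreeMonoid.length_mul] at *
      omega

end RepD

/-! ### leading-term span and the crux lemma -/

def ellA (J : Submodule ℝ (MAg g)) (d : ℕ) : Submodule ℝ (MAg g) :=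
  Submodule.span ℝ {q | ∃ p ∈ J, p ≠ 0 ∧ degA p = d ∧ q = pie g d p}

lemma ellA_homog (J : Submodule ℝ (MAg g)) (d : ℕ) :
    ∀ u ∈ ellA J d, ∀ v ∈ (u : MAg g).coeff.support, FreeMonoid.length v = d := by
  have : ellA J d ≤ (Finsupp.supported ℝ ℝ {v : Wd g | FreeMonoid.length v = d}).comap
      (MonoidAlgebra.coeffLinearEquiv ℝ).toLinearMap := by
    rw [ellA, Submodule.span_le]
    rintro x ⟨p, hp, hpne, hdeg, rfl⟩
    rw [SetLike.mem_coe, Submodule.mem_comap, LinearEquiv.coe_coe,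
      MonoidAlgebra.coeffLinearEquiv_apply, Finsupp.mem_supported]
    intro v hv
    exact (supp_pie d p hv).2
  intro u hu v hv
  by_contra hne
  exact Finsupp.mem_support_iff.1 hv
    ((Finsupp.mem_supported' _ _).1 (Submodule.mem_comap.1 (this hu)) v hne)

lemma pie_d_mem_ellA {J : Submodule ℝ (MAg g)} {d : ℕ} {r : MAg g} (h1 : r ∈ J)
    (h2 : ∀ v ∈ r.coeff.support, FreeMonoid.length v ≤ d) : pie g d r ∈ ellA J d := by
  by_cases hz : r = 0
  · rw [hz, _root_.map_zero]; exact Submodule.zero_mem _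
  by_cases hdeg : degA r = d
  · exact Submodule.subset_span ⟨r, h1, hz, hdeg, rfl⟩
  · have hlt : degA r < d := by
      have : degA r ≤ d := Finset.sup_le h2
      omega
    rw [pie_eq_zero d (fun v hv => by have := le_degA hv; omega)]
    exact Submodule.zero_mem _

lemma pie_m_eq {d m : ℕ} (hdm : d ≤ m) (f₀ : MAg g) (F : Wd g →₀ MAg g)
    (h2 : ∀ v ∈ f₀.coeff.support, FreeMonoid.length v < d)
    (h4 : ∀ w, ∀ v ∈ (F w).coeff.support, FreeMonoid.length v ≤ d)
    (h5 : ∀ w, F w ≠ 0 → FreeMonoid.length w + d ≤ m) :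
    pie g m (f₀ + F.sum fun w r => MonoidAlgebra.single w (1:ℝ) * r)
      = ∑ w ∈ F.support.filter (fun w => FreeMonoid.length w + d = m),
          MonoidAlgebra.single w (1:ℝ) * pie g d (F w) := by
  classical
  rw [_root_.map_add, pie_eq_zero m (fun v hv => by have := h2 v hv; omega), zero_add]
  rw [Finsupp.sum, _root_.map_sum, Finset.sum_filter]
  apply Finset.sum_congr rfl
  intro w hw
  have hFw : F w ≠ 0 := Finsupp.mem_support_iff.1 hw
  have hbd := h5 w hFw
  by_cases hp : FreeMonoid.length w + d = m
  · rw [if_pos hp, ← hp, pie_single_one_mul]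
  · rw [if_neg hp]
    have hm : m = FreeMonoid.length w + (m - FreeMonoid.length w) := by omega
    rw [hm, pie_single_one_mul, pie_eq_zero (m - FreeMonoid.length w)
      (fun v hv => by have := h4 w v hv; omega), mul_zero]

lemma crux {J : Submodule ℝ (MAg g)} {d : ℕ} (hJ : ∀ b : MAg g, ∀ u ∈ J, b * u ∈ J) :
    ∀ m (f : MAg g), RepD J d m f → f ≠ 0 → d ≤ degA f →
      pie g (degA f) f ∈ prodSpanH d (ellA J d) (degA f) := by
  classical
  intro m
  induction m using Nat.strong_induction_on with
  | _ m IH =>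
    intro f hrep hne hd
    obtain ⟨f₀, F, h1, h2, h3, h4, h5, h6⟩ := hrep
    set e := degA f with he
    have hem : e ≤ m := by
      obtain ⟨v, hv, hvl⟩ := degA_spec hne
      rw [h6, MonoidAlgebra.coeff_add] at hv
      rcases Finset.mem_union.1 (Finsupp.support_add hv) with h | h
      · have := h2 v h; omega
      · rw [MonoidAlgebra.coeff_finsuppSum] at h
        obtain ⟨w, hw, hvw⟩ := Finset.mem_biUnion.1 (Finsupp.support_sum h)
        obtain ⟨v₂, hv₂, rfl⟩ := supp_single_one_mul hvw
        have hFw : F w ≠ 0 := Finsupp.mem_support_iff.1 hw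
        have hb := h5 w hFw
        have hl := h4 w v₂ hv₂
        rw [FreeMonoid.length_mul] at hvl
        omega
    rcases eq_or_lt_of_le hem with heq | hlt
    · -- top degree is m : read off the leading term
      rw [heq] at hd ⊢
      rw [h6, pie_m_eq hd f₀ F h2 h4 h5]
      apply Submodule.sum_mem
      intro w hw
      exact Submodule.subset_span
        ⟨w, pie g d (F w), (Finset.mem_filter.1 hw).2,
          pie_d_mem_ellA (h3 w) (h4 w), rfl⟩
    · -- top terms cancel : reduce m
      have hdm : d ≤ m := by omega
      have hz : (∑ w ∈ F.support.filter (fun w => FreeMonoid.length w + d = m),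
          MonoidAlgebra.single w (1:ℝ) * pie g d (F w)) = 0 := by
        rw [← pie_m_eq hdm f₀ F h2 h4 h5, ← h6]
        exact pie_eq_zero m (fun v hv => by have := le_degA hv; omega)
      have hslice : ∀ w₀ ∈ F.support.filter (fun w => FreeMonoid.length w + d = m),
          pie g d (F w₀) = 0 := by
        intro w₀ hw₀
        have := congrArg (slc w₀) hz
        rw [_root_.map_sum, _root_.map_zero] at this
        rw [← this]
        have : ∀ w ∈ F.support.filter (fun w => FreeMonoid.length w + d = m),
            slc w₀ (MonoidAlgebra.single w (1:ℝ) * pie g d (F w))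
              = if w₀ = w then pie g d (F w) else 0 := by
          intro w hw
          exact slc_single_one_mul w₀ w
            (by have := (Finset.mem_filter.1 hw).2; have := (Finset.mem_filter.1 hw₀).2; omega)
            (pie g d (F w))
        rw [Finset.sum_congr rfl this, Finset.sum_ite_eq _ w₀ (fun w => pie g d (F w)),
          if_pos hw₀]
      -- build a representation with smaller bound
      have hreduce : RepD J d (m - 1) f := by
        have hsplit : f = (f₀ + (F.filter (fun w => ¬ (FreeMonoid.length w + d = m))).sum
              (fun w r => MonoidAlgebra.single w (1:ℝ) * r))
            + ∑ w₀ ∈ F.support.filter (fun w => FreeMonoid.length w + d = m),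
                MonoidAlgebra.single w₀ (1:ℝ) * F w₀ := by
          have hFsplit : F.filter (fun w => FreeMonoid.length w + d = m)
              + F.filter (fun w => ¬ (FreeMonoid.length w + d = m)) = F :=
            Finsupp.filter_add_filter_not F _
          have hsum : F.sum (fun w r => MonoidAlgebra.single w (1:ℝ) * r)
              = (F.filter (fun w => FreeMonoid.length w + d = m)).sum
                  (fun w r => MonoidAlgebra.single w (1:ℝ) * r)
                + (F.filter (fun w => ¬ (FreeMonoid.length w + d = m))).sum
                  (fun w r => MonoidAlgebra.single w (1:ℝ) * r) := by
            rw [← Finsupp.sum_add_index' (fun w => by rw [mul_zero])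
              (fun w r r' => by rw [mul_add]), hFsplit]
          have hfilteq : (F.filter (fun w => FreeMonoid.length w + d = m)).sum
              (fun w r => MonoidAlgebra.single w (1:ℝ) * r)
              = ∑ w₀ ∈ F.support.filter (fun w => FreeMonoid.length w + d = m),
                  MonoidAlgebra.single w₀ (1:ℝ) * F w₀ := by
            rw [Finsupp.sum, Finsupp.support_filter]
            apply Finset.sum_congr rfl
            intro w hw
            have hap : (F.filter (fun w => FreeMonoid.length w + d = m)) w = F w :=
              Finsupp.filter_apply_pos _ _ (Finset.mem_filter.1 hw).2
            rw [hap]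
          rw [h6, hsum, hfilteq]
          abel
        rw [hsplit]
        apply Rep_add
        · refine ⟨f₀, F.filter (fun w => ¬ (FreeMonoid.length w + d = m)), h1, h2, ?_, ?_, ?_, rfl⟩
          · intro w
            rw [Finsupp.filter_apply]
            split_ifs
            all_goals first | exact h3 w | exact Submodule.zero_mem _
          · intro w v hv
            rw [Finsupp.filter_apply] at hv
            split_ifs at hv with h
            all_goals first | exact h4 w v hv | simp at hv
          · intro w hw
            rw [Finsupp.filter_apply] at hw
            split_ifs at hw with h
            all_goals first
              | (exact absurd rfl hw)
              | (have := h5 w hw; omega)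
        · apply Rep_sum
          intro w₀ hw₀
          have hm1 : FreeMonoid.length w₀ + d - 1 = m - 1 := by
            have := (Finset.mem_filter.1 hw₀).2; omega
          have hsupp : ∀ v ∈ (F w₀).coeff.support, FreeMonoid.length v < d := by
            intro v hv
            have hle := h4 w₀ v hv
            rcases lt_or_eq_of_le hle with h | h
            · exact h
            · exfalso
              have : (pie g d (F w₀)).coeff v = (F w₀).coeff v := by rw [pie_apply, h, if_pos rfl]
              rw [hslice w₀ hw₀] at this
              exact Finsupp.mem_support_iff.1 hv (by simpa using this.symm)
          have := Rep_norm hJ w₀ (1:ℝ) (h3 w₀) hsupp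
          rwa [hm1] at this
      exact IH (m - 1) (by omega) f hreduce hne hd

/-! ### transport -/

lemma pie_eq_filter {e : ℕ} (f : MAg g)
    {i : DecidablePred (fun w : Wd g => FreeMonoid.length w = e)} :
    MonoidAlgebra.ofCoeff
        (@Finsupp.filter _ _ _ (fun w : Wd g => FreeMonoid.length w = e) i f.coeff)
        = pie g e f := by
  ext v
  rw [pie_apply, MonoidAlgebra.coeff_ofCoeff, Finsupp.filter_apply]
  split_ifs <;> rfl

lemma degA_toMA (p : FA g) : degA (toMA (g := g) p) = deg p := rfl

lemma lead_transport (p : FA g) :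
    toMA (g := g) (lead p) = pie g (deg p) (toMA (g := g) p) := by
  rw [lead, AlgEquiv.apply_symm_apply]
  exact pie_eq_filter _

/-- If `I` is a left ideal generated by polynomials of degree `≤ d` and
`𝒜^H_d = I^ℓ_d ⊕ G`, then `I ∩ 𝒜G = 𝒜I^ℓ_d ∩ 𝒜G = {0}`. -/
theorem stmt7 (g d : ℕ) (S : Set (FA g)) (hSdeg : ∀ s ∈ S, s ∈ Adeg g d)
    (I : Submodule (FA g) (FA g)) (hI : I = Submodule.span (FA g) S)
    (G : Submodule ℝ (FA g)) (hG : G ≤ AdegH g d)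
    (hdisj : Disjoint (ellSet (I.restrictScalars ℝ) d) G)
    (hsum : ellSet (I.restrictScalars ℝ) d ⊔ G = AdegH g d) :
    I.restrictScalars ℝ ⊓ (⊤ * G) = ⊥ ∧
      (⊤ * ellSet (I.restrictScalars ℝ) d) ⊓ (⊤ * G) = ⊥ := by
  classical
  have hinj : Function.Injective (toMA (g := g)) := (toMA (g := g)).injective
  set J : Submodule ℝ (MAg g) :=
    (I.restrictScalars ℝ).map (toMA (g := g)).toLinearMap with hJdef
  set G' : Submodule ℝ (MAg g) := G.map (toMA (g := g)).toLinearMap with hG'def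
  have hmem : ∀ (V : Submodule ℝ (FA g)) (x : FA g),
      toMA (g := g) x ∈ V.map (toMA (g := g)).toLinearMap ↔ x ∈ V := by
    intro V x
    constructor
    · rintro ⟨y, hy, hxy⟩
      have : y = x := hinj hxy
      exact this ▸ hy
    · intro h
      exact ⟨x, h, rfl⟩
  have hJmul : ∀ b : MAg g, ∀ u ∈ J, b * u ∈ J := by
    intro b u hu
    obtain ⟨x, hx, rfl⟩ := hu
    have hx' : ((toMA (g := g)).symm b) • x ∈ I := Submodule.smul_mem I _ hx
    refine ⟨((toMA (g := g)).symm b) • x, hx', ?_⟩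
    show toMA (g := g) (((toMA (g := g)).symm b) • x) = b * toMA (g := g) x
    rw [smul_eq_mul, _root_.map_mul, AlgEquiv.apply_symm_apply]
  have hG'h : ∀ u ∈ G', ∀ v ∈ (u : MAg g).coeff.support, FreeMonoid.length v = d := by
    rintro u ⟨x, hx, rfl⟩ v hv
    have h2 := hG hx
    rw [AdegH, Submodule.mem_comap, Finsupp.mem_supported] at h2
    exact h2 hv
  have hellmap :
      (ellSet (I.restrictScalars ℝ) d).map (toMA (g := g)).toLinearMap = ellA J d := by
    rw [ellSet, ellA, Submodule.map_span]
    congr 1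
    ext q
    constructor
    · rintro ⟨q0, ⟨p, hp, hpne, hdeg, rfl⟩, rfl⟩
      refine ⟨toMA (g := g) p, (hmem _ p).2 hp, ?_, by rw [degA_toMA, hdeg], ?_⟩
      · intro h
        exact hpne (hinj (by rw [h, _root_.map_zero]))
      · show toMA (g := g) (lead p) = _
        rw [lead_transport, hdeg]
    · rintro ⟨p', hp', hne', hdeg', rfl⟩
      obtain ⟨p, hp, rfl⟩ := hp'
      refine ⟨lead p, ⟨p, hp, ?_, ?_, rfl⟩, ?_⟩
      · intro h
        rw [h, _root_.map_zero] at hne'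
        exact hne' rfl
      · rw [← degA_toMA]; exact hdeg'
      · show toMA (g := g) (lead p) = _
        rw [lead_transport]
        have hdp : deg p = d := by rw [← degA_toMA]; exact hdeg'
        rw [hdp]
        rfl
  have hellh := ellA_homog J d
  have hdisj' : Disjoint (ellA J d) G' := by
    rw [← hellmap, Submodule.disjoint_def]
    rintro u ⟨p, hp, rfl⟩ ⟨q, hq, hqu⟩
    have hqp : q = p := hinj hqu
    have : p ∈ ellSet (I.restrictScalars ℝ) d ⊓ G := ⟨hp, hqp ▸ hq⟩
    have hp0 : p = 0 := by
      have := hdisj.le_bot this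
      simpa using this
    show toMA (g := g) p = 0
    rw [hp0, _root_.map_zero]
  have hmulspan : ∀ (V : Submodule ℝ (FA g)),
      ∀ x ∈ ((⊤ : Submodule ℝ (FA g)) * V), toMA (g := g) x
        ∈ prodSpan (V.map (toMA (g := g)).toLinearMap) := by
    intro V x hx
    refine Submodule.mul_induction_on hx ?_ ?_
    · intro a _ h hh
      rw [_root_.map_mul]
      exact mul_mem_prodSpan _ (toMA (g := g) a) ((hmem V h).2 hh)
    · intro y z hy hz
      rw [_root_.map_add]
      exact Submodule.add_mem _ hy hz
  -- left-multiplication closure of representations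
  have hleft : ∀ (b : MAg g) (f : MAg g),
      (∃ m, RepD J d m f) → ∃ m', RepD J d m' (b * f) := by
    intro b
    induction b using MonoidAlgebra.induction_linear with
    | zero => intro f _; exact ⟨0, by rw [zero_mul]; exact Rep_zero 0⟩
    | add a b ha hb =>
        intro f hf
        obtain ⟨m1, h1⟩ := ha f hf
        obtain ⟨m2, h2⟩ := hb f hf
        exact ⟨max m1 m2, by
          rw [add_mul]
          exact Rep_add (Rep_mono (le_max_left _ _) h1) (Rep_mono (le_max_right _ _) h2)⟩
    | single w c =>
        rintro f ⟨m, f₀, F, h1, h2, h3, h4, h5, h6⟩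
        refine ⟨FreeMonoid.length w + d + m, ?_⟩
        rw [h6, mul_add]
        apply Rep_add
        · exact Rep_mono (by omega) (Rep_norm hJmul w c h1 h2)
        · rw [Finsupp.sum, Finset.mul_sum]
          apply Rep_sum
          intro w' hw'
          have heq : (MonoidAlgebra.single w c : MAg g)
                * (MonoidAlgebra.single w' (1:ℝ) * F w')
              = MonoidAlgebra.single (w * w') (1:ℝ) * (c • F w') := by
            rw [← mul_assoc, MonoidAlgebra.single_mul_single, mul_one, mul_smul_comm,
              ← smul_mul_assoc]
            congr 1
            rw [MonoidAlgebra.smul_single', mul_one]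
          rw [heq]
          apply Rep_single_term (Submodule.smul_mem _ _ (h3 w'))
          · intro v hv
            rw [MonoidAlgebra.coeff_smul] at hv
            exact h4 w' v (Finsupp.support_smul hv)
          · have := h5 w' (Finsupp.mem_support_iff.1 hw')
            rw [FreeMonoid.length_mul]
            omega
  have hC1 : ∀ x ∈ I, ∃ m, RepD J d m (toMA (g := g) x) := by
    intro x hx
    rw [hI] at hx
    refine Submodule.span_induction ?_ ?_ ?_ ?_ hx
    · intro s hs
      refine ⟨d, ?_⟩
      have hsJ : toMA (g := g) s ∈ J := by
        rw [hJdef]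
        exact (hmem _ s).2 (by rw [hI]; exact Submodule.subset_span hs)
      have hsupp : ∀ v ∈ (toMA (g := g) s).coeff.support, FreeMonoid.length v ≤ d := by
        intro v hv
        have h2 := hSdeg s hs
        rw [Adeg, Submodule.mem_comap, Finsupp.mem_supported] at h2
        exact h2 hv
      have := Rep_single_term (J := J) (m := d) (w := (1 : Wd g)) hsJ hsupp
        (by simp [FreeMonoid.length_one])
      rwa [← MonoidAlgebra.one_def, one_mul] at this
    · exact ⟨0, by rw [_root_.map_zero]; exact Rep_zero 0⟩
    · rintro x y _ _ ⟨m1, h1⟩ ⟨m2, h2⟩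
      exact ⟨max m1 m2, by
        rw [_root_.map_add]
        exact Rep_add (Rep_mono (le_max_left _ _) h1) (Rep_mono (le_max_right _ _) h2)⟩
    · rintro a x _ ⟨m, hm⟩
      have : toMA (g := g) (a • x) = toMA (g := g) a * toMA (g := g) x := by
        rw [smul_eq_mul, _root_.map_mul]
      rw [this]
      exact hleft _ _ ⟨m, hm⟩
  constructor
  · rw [Submodule.eq_bot_iff]
    intro x hx
    obtain ⟨hxI, hxG⟩ := Submodule.mem_inf.1 hx
    by_contra hne0
    have hfne : toMA (g := g) x ≠ 0 := fun h => hne0 (hinj (by rw [h, _root_.map_zero]))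
    have hfG : toMA (g := g) x ∈ prodSpan G' := hmulspan G x hxG
    have hd : d ≤ degA (toMA (g := g) x) := by
      obtain ⟨v, hv, hvl⟩ := degA_spec hfne
      rw [← hvl]
      exact supp_prodSpan_ge hG'h hfG hv
    obtain ⟨m, hrep⟩ := hC1 x hxI
    have h1 := crux hJmul m _ hrep hfne hd
    have h2 := pie_mem_prodSpanH hG'h (degA (toMA (g := g) x)) hfG
    exact pie_degA_ne hfne (eq_zero_of_mem_prodSpanH_disj hellh hG'h hdisj' h1 h2)
  · rw [Submodule.eq_bot_iff]
    intro x hx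
    obtain ⟨hxE, hxG⟩ := Submodule.mem_inf.1 hx
    have h1 : toMA (g := g) x ∈ prodSpan (ellA J d) := by
      rw [← hellmap]
      exact hmulspan _ x hxE
    have h2 : toMA (g := g) x ∈ prodSpan G' := hmulspan G x hxG
    have h0 := eq_zero_of_mem_prodSpan_inter hellh hG'h hdisj' h1 h2
    exact hinj (by rw [h0, _root_.map_zero])

end
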